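/- Let w ∈ S_n, let v ⊆ w be a subword of size m, and set u := perm(v) ∈ S_m. Then for every B ∈ BPD(w;v), the diagram φ_v^w(B) has exactly the same number of j-elbow tiles as B, i.e., j(φ_v^w(B)) = j(B); in particular, for every reduced B ∈ bpd(w;v) one has wt^β(B) = wt^β(φ_v^w(B)). -/

import Mathlib

/-!
Formalization of bumpless pipe dreams (BPDs).

A bumpless pipe dream of size `n` assigns one of six tiles (blank, horizontal,
vertical, crossing, r-elbow, j-elbow) to each cell of the `n × n` grid, subject
to matching and boundary conditions.  We additionally include a `bump` tile
(an r-elbow together with a j-elbow in one cell), which is used only in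
K-theoretic resolutions of BPDs.
-/

/-- The tile types: the six BPD tiles together with the bump tile used in
K-theoretic resolutions. -/
inductive Tile : Type
  | blank | horiz | vert | cross | bump | relbow | jelbow
  deriving DecidableEq

namespace Tile

/-- Does a pipe segment meet the south edge of the tile? -/
def south : Tile → Bool
  | vert => true | cross => true | bump => true | relbow => true
  | _ => false

/-- Does a pipe segment meet the north edge of the tile? -/
def north : Tile → Bool
  | vert => true | cross => true | bump => true | jelbow => true
  | _ => false

/-- Does a pipe segment meet the west edge of the tile? -/
def west : Tile → Bool
  | horiz => true | cross => true | bump => true | jelbow => true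
  | _ => false

/-- Does a pipe segment meet the east edge of the tile? -/
def east : Tile → Bool
  | horiz => true | cross => true | bump => true | relbow => true
  | _ => false

/-- A pipe entering the tile `t` (from the south if `d = true`, from the west if
`d = false`) exits through the east edge; otherwise it exits through the north
edge. -/
def exitEast (t : Tile) (d : Bool) : Bool :=
  if d then (t == relbow || t == bump) else !(t == jelbow || t == bump)

end Tile

/-- A tile diagram of size `n`: an assignment of a tile to each cell `(i, j)`
(row `i` from the top, column `j` from the left, `0`-indexed) of the `n × n`
grid, such that adjacent tiles match along shared edges, a segment meets the
south boundary edge of every column and the east boundary edge of every row,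
and no segment meets the north or west boundary of the grid.  (Cells outside
the grid are blank, as a normalization.)  A diagram may use the `bump` tile;
honest bumpless pipe dreams (`BPD`) do not. -/
structure Diagram (n : ℕ) : Type where
  tile : ℕ → ℕ → Tile
  vmatch : ∀ i j, i + 1 < n → j < n → (tile i j).south = (tile (i + 1) j).north
  hmatch : ∀ i j, i < n → j + 1 < n → (tile i j).east = (tile i (j + 1)).west
  bottom : ∀ j, j < n → (tile (n - 1) j).south = true
  right : ∀ i, i < n → (tile i (n - 1)).east = true
  top : ∀ j, j < n → (tile 0 j).north = false
  left : ∀ i, i < n → (tile i 0).west = false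
  outside : ∀ i j, ¬(i < n ∧ j < n) → tile i j = Tile.blank

/-- A bumpless pipe dream of size `n`: a diagram using only the six BPD tiles
(no bump tiles). -/
structure BPD (n : ℕ) extends Diagram n where
  nobump : ∀ i j, tile i j ≠ Tile.bump

namespace Diagram

variable {n : ℕ}

/-- One step of a pipe: a pipe currently in cell `(σ.1, σ.2.1)`, having entered
from the south if `σ.2.2 = true` (from the west otherwise), moves to the next
cell (east, entering from the west; or north, entering from the south). -/
def Step (D : Diagram n) (σ σ' : ℕ × ℕ × Bool) : Prop :=
  σ.1 < n ∧ σ.2.1 < n ∧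
    (if (D.tile σ.1 σ.2.1).exitEast σ.2.2 then
        σ.2.1 + 1 < n ∧ σ' = (σ.1, σ.2.1 + 1, false)
      else
        0 < σ.1 ∧ σ' = (σ.1 - 1, σ.2.1, true))

/-- The pipe entering at the bottom of column `y` passes through the cell `c`. -/
def Passes (D : Diagram n) (y : ℕ) (c : ℕ × ℕ) : Prop :=
  ∃ d : Bool, Relation.ReflTransGen D.Step (n - 1, y, true) (c.1, c.2, d)

/-- The pipe entering at the bottom of column `y` exits at the right of row `x`;
that is, `y → x` is a pipe of the diagram. -/
def ExitsAt (D : Diagram n) (y x : ℕ) : Prop :=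
  ∃ d : Bool, Relation.ReflTransGen D.Step (n - 1, y, true) (x, n - 1, d) ∧
    (D.tile x (n - 1)).exitEast d = true

/-- The permutation of the diagram is `w`: for every row `x`, `w x → x` is a
pipe of the diagram. -/
def HasPerm (D : Diagram n) (w : Equiv.Perm (Fin n)) : Prop :=
  ∀ x : Fin n, D.ExitsAt (w x) x

/-- The set of crossing tiles shared by the pipes entering at the bottoms of
columns `y₁` and `y₂`. -/
def SharedCrossings (D : Diagram n) (y₁ y₂ : ℕ) : Set (ℕ × ℕ) :=
  {c | D.tile c.1 c.2 = Tile.cross ∧ D.Passes y₁ c ∧ D.Passes y₂ c}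

/-- The diagram is reduced: any two distinct pipes pass through at most one
common crossing tile. -/
def Reduced (D : Diagram n) : Prop :=
  ∀ y₁ y₂, y₁ < n → y₂ < n → y₁ ≠ y₂ → (D.SharedCrossings y₁ y₂).Subsingleton

/-- `y → x` is a removable pipe of the diagram: it is a pipe, the tile at
`(x, y)` is an r-elbow, and it is the only r-elbow tile in row `x` and also the
only r-elbow tile in column `y`. -/
def RemovablePipe (D : Diagram n) (y x : ℕ) : Prop :=
  D.ExitsAt y x ∧ D.tile x y = Tile.relbow ∧
    (∀ j, j ≠ y → D.tile x j ≠ Tile.relbow) ∧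
    (∀ i, i ≠ x → D.tile i y ≠ Tile.relbow)

/-- The diagram is minimal: it has no removable pipe. -/
def Minimal (D : Diagram n) : Prop := ∀ y x, ¬ D.RemovablePipe y x

/-- The number of j-elbow tiles of the diagram. -/
def jcount (D : Diagram n) : ℕ :=
  ((Finset.range n ×ˢ Finset.range n).filter
    (fun c => D.tile c.1 c.2 = Tile.jelbow)).card

end Diagram

namespace BPD

variable {n m : ℕ}

/-- `B ∈ BPD(w; v)` for the subword `v` of `w` with (strictly increasing) index
sequence `s : Fin m ↪o Fin n`: the permutation of `B` is `w` and the removable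
pipes of `B` are precisely the pipes `w k → k` for the indices `k` of `w` not
used by the subword. -/
def InBPDv (B : BPD n) (w : Equiv.Perm (Fin n)) (s : Fin m ↪o Fin n) : Prop :=
  B.toDiagram.HasPerm w ∧
    ∀ y x : ℕ, B.toDiagram.RemovablePipe y x ↔
      ∃ k : Fin n, k ∉ Set.range s ∧ x = (k : ℕ) ∧ y = (w k : ℕ)

end BPD

/-- `c` comes strictly before `c'` in the (weakly north-east) traversal order of
a pipe: `c` is weakly south-west of `c'` and is a different cell. -/
def Before (c c' : ℕ × ℕ) : Prop := c'.1 ≤ c.1 ∧ c.2 ≤ c'.2 ∧ c ≠ c'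

namespace Diagram

/-- The pipes entering in columns `y₁` and `y₂` pass through a common crossing
tile strictly before the cell `c`. -/
def CrossedBefore {n : ℕ} (D : Diagram n) (y₁ y₂ : ℕ) (c : ℕ × ℕ) : Prop :=
  ∃ c' ∈ D.SharedCrossings y₁ y₂, Before c' c

end Diagram

/-- `D` is the K-theoretic resolution `B_K` of the bumpless pipe dream `B`:
each crossing tile of `B` either remains a crossing or becomes a bump in `D`
(all other tiles are unchanged), any two pipes of `D` cross at most once, and at
a former crossing tile the two pipes of `D` passing through it bounce (bump)
there exactly when they have already crossed before reaching it. -/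
structure IsKRes {n : ℕ} (B : BPD n) (D : Diagram n) : Prop where
  agree : ∀ i j, B.tile i j ≠ Tile.cross → D.tile i j = B.tile i j
  res : ∀ i j, B.tile i j = Tile.cross →
    D.tile i j = Tile.cross ∨ D.tile i j = Tile.bump
  once : D.Reduced
  bump_iff : ∀ i j y₁ y₂, y₁ < n → y₂ < n → y₁ ≠ y₂ →
    D.Passes y₁ (i, j) → D.Passes y₂ (i, j) → B.tile i j = Tile.cross →
    (D.tile i j = Tile.bump ↔ D.CrossedBefore y₁ y₂ (i, j))

/-- The permutation `w` contains the pattern `p`. -/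
def PermContains {n k : ℕ} (w : Equiv.Perm (Fin n)) (p : Equiv.Perm (Fin k)) : Prop :=
  ∃ f : Fin k ↪o Fin n, ∀ a b : Fin k, p a < p b ↔ w (f a) < w (f b)

/-- The pattern `1243` (as a permutation of `Fin 4`, `0`-indexed). -/
def p1243 : Equiv.Perm (Fin 4) := Equiv.swap 2 3

/-- The pattern `2143` (as a permutation of `Fin 4`, `0`-indexed). -/
def p2143 : Equiv.Perm (Fin 4) := Equiv.swap 0 1 * Equiv.swap 2 3
/-- The `β`-weight of a (reduced) diagram: `wt^β(B) = (1 + β)^{j(B)} ∈ ℤ[β]`,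
where `j(B)` is the number of j-elbow tiles of `B` and `β` is the polynomial
variable. -/
noncomputable def wtβ {n : ℕ} (D : Diagram n) : Polynomial ℤ :=
  (1 + Polynomial.X) ^ D.jcount
namespace RPJAux

/-! Tile case-analysis lemmas. -/

lemma tWF {tl : Tile} (h : tl.west = false) (h1 : tl ≠ Tile.relbow)
    (h2 : tl ≠ Tile.bump) :
    tl.east = false ∧ tl.north = tl.south ∧ tl ≠ Tile.jelbow := by
  cases tl <;> simp_all [Tile.west, Tile.east, Tile.north, Tile.south]

lemma tET {tl : Tile} (h : tl.east = true) (h1 : tl ≠ Tile.relbow)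
    (h2 : tl ≠ Tile.bump) :
    tl.west = true ∧ tl.north = tl.south ∧ tl ≠ Tile.jelbow := by
  cases tl <;> simp_all [Tile.west, Tile.east, Tile.north, Tile.south]

lemma tNF {tl : Tile} (h : tl.north = false) (h1 : tl ≠ Tile.relbow)
    (h2 : tl ≠ Tile.bump) :
    tl.south = false ∧ tl.west = tl.east ∧ tl ≠ Tile.jelbow := by
  cases tl <;> simp_all [Tile.west, Tile.east, Tile.north, Tile.south]

lemma tST {tl : Tile} (h : tl.south = true) (h1 : tl ≠ Tile.relbow)
    (h2 : tl ≠ Tile.bump) :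
    tl.north = true ∧ tl.west = tl.east ∧ tl ≠ Tile.jelbow := by
  cases tl <;> simp_all [Tile.west, Tile.east, Tile.north, Tile.south]

variable {n : ℕ} (B : BPD n)

/-- In the row of a removable pipe, tiles strictly left of the elbow have no
segment through the west edge. -/
lemma rowWest {x y : ℕ} (hx : x < n) (hy : y < n)
    (hrow : ∀ j, j ≠ y → B.tile x j ≠ Tile.relbow) :
    ∀ j, j ≤ y → (B.tile x j).west = false := by
  intro j
  induction j with
  | zero => intro _; exact B.left x hx
  | succ j ih =>
    intro hj
    have h1 := ih (by omega)
    have h2 := (tWF h1 (hrow j (by omega)) (B.nobump x j)).1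
    rw [← B.hmatch x j hx (by omega)]
    exact h2

lemma rowEastAux {x y : ℕ} (hx : x < n) (hy : y < n)
    (hrow : ∀ j, j ≠ y → B.tile x j ≠ Tile.relbow) :
    ∀ k j, n - 1 - j = k → y ≤ j → j < n → (B.tile x j).east = true := by
  intro k
  induction k with
  | zero =>
    intro j h1 _ h3
    have : j = n - 1 := by omega
    rw [this]; exact B.right x hx
  | succ k ih =>
    intro j h1 h2 h3
    have h4 : (B.tile x (j + 1)).east = true := ih (j + 1) (by omega) (by omega) (by omega)
    have h5 := (tET h4 (hrow (j + 1) (by omega)) (B.nobump x (j + 1))).1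
    rw [B.hmatch x j hx (by omega)]
    exact h5

lemma rowEast {x y : ℕ} (hx : x < n) (hy : y < n)
    (hrow : ∀ j, j ≠ y → B.tile x j ≠ Tile.relbow)
    {j : ℕ} (h1 : y ≤ j) (h2 : j < n) : (B.tile x j).east = true :=
  rowEastAux B hx hy hrow (n - 1 - j) j rfl h1 h2

lemma colNorth {x y : ℕ} (hx : x < n) (hy : y < n)
    (hcol : ∀ i, i ≠ x → B.tile i y ≠ Tile.relbow) :
    ∀ i, i ≤ x → (B.tile i y).north = false := by
  intro i
  induction i with
  | zero => intro _; exact B.top y hy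
  | succ i ih =>
    intro hi
    have h1 := ih (by omega)
    have h2 := (tNF h1 (hcol i (by omega)) (B.nobump i y)).1
    rw [← B.vmatch i y (by omega) hy]
    exact h2

lemma colSouthAux {x y : ℕ} (hx : x < n) (hy : y < n)
    (hcol : ∀ i, i ≠ x → B.tile i y ≠ Tile.relbow) :
    ∀ k i, n - 1 - i = k → x ≤ i → i < n → (B.tile i y).south = true := by
  intro k
  induction k with
  | zero =>
    intro i h1 _ h3
    have : i = n - 1 := by omega
    rw [this]; exact B.bottom y hy
  | succ k ih =>
    intro i h1 h2 h3
    have h4 : (B.tile (i + 1) y).south = true := ih (i + 1) (by omega) (by omega) (by omega)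
    have h5 := (tST h4 (hcol (i + 1) (by omega)) (B.nobump (i + 1) y)).1
    rw [B.vmatch i y (by omega) hy]
    exact h5

lemma colSouth {x y : ℕ} (hx : x < n) (hy : y < n)
    (hcol : ∀ i, i ≠ x → B.tile i y ≠ Tile.relbow)
    {i : ℕ} (h1 : x ≤ i) (h2 : i < n) : (B.tile i y).south = true :=
  colSouthAux B hx hy hcol (n - 1 - i) i rfl h1 h2

/-- Off-elbow tiles in the row of a removable pipe preserve vertical segments
and are not j-elbows. -/
lemma rowProp {x y : ℕ} (hx : x < n) (hy : y < n)
    (hrow : ∀ j, j ≠ y → B.tile x j ≠ Tile.relbow) :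
    ∀ j, j < n → j ≠ y →
      (B.tile x j).north = (B.tile x j).south ∧ B.tile x j ≠ Tile.jelbow := by
  intro j hj hne
  rcases lt_or_gt_of_ne hne with h | h
  · have h1 := rowWest B hx hy hrow j h.le
    exact (tWF h1 (hrow j hne) (B.nobump x j)).2
  · have h1 := rowEast B hx hy hrow h.le hj
    exact (tET h1 (hrow j hne) (B.nobump x j)).2

/-- Off-elbow tiles in the column of a removable pipe preserve horizontal
segments and are not j-elbows. -/
lemma colProp {x y : ℕ} (hx : x < n) (hy : y < n)
    (hcol : ∀ i, i ≠ x → B.tile i y ≠ Tile.relbow) :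
    ∀ i, i < n → i ≠ x →
      (B.tile i y).west = (B.tile i y).east ∧ B.tile i y ≠ Tile.jelbow := by
  intro i hi hne
  rcases lt_or_gt_of_ne hne with h | h
  · have h1 := colNorth B hx hy hcol i h.le
    exact (tNF h1 (hcol i hne) (B.nobump i y)).2
  · have h1 := colSouth B hx hy hcol h.le hi
    exact (tST h1 (hcol i hne) (B.nobump i y)).2

end RPJAux

/-- Proposition `bpd_weight`.  Let `w ∈ S_n`, let `v ⊆ w` be
a subword of size `m` with index sequence `s` and entry sequence `t`, and set
`u := perm(v) ∈ S_m`.  Then for every `B ∈ BPD(w; v)`, the diagram `φ_v^w(B)`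
has exactly the same number of j-elbow tiles as `B`; in particular, for every
reduced `B ∈ bpd(w; v)` one has `wt^β(B) = wt^β(φ_v^w(B))`. -/
theorem removing_pipes_preserves_jcount {n m : ℕ} (w : Equiv.Perm (Fin n))
    (s t : Fin m ↪o Fin n) (u : Equiv.Perm (Fin m))
    (hst : ∀ i : Fin m, w (s i) = t (u i))
    (B : BPD n) (hB : B.InBPDv w s) :
    ∃ B' : BPD m, (∀ i j : Fin m, B'.tile i j = B.tile (s i) (t j)) ∧
      B'.toDiagram.jcount = B.toDiagram.jcount ∧
      (B.toDiagram.Reduced → wtβ B.toDiagram = wtβ B'.toDiagram) := by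
  obtain ⟨hperm, hrem⟩ := hB
  have hsmono : StrictMono s := s.strictMono
  have htmono : StrictMono t := t.strictMono
  have htw : ∀ j : Fin m, t j = w (s (u.symm j)) := by
    intro j
    have := (hst (u.symm j)).symm
    rwa [Equiv.apply_symm_apply] at this
  -- removed rows carry a removable pipe
  have hRow : ∀ (a : ℕ) (ha : a < n), (∀ i : Fin m, (s i : ℕ) ≠ a) →
      B.toDiagram.RemovablePipe (w ⟨a, ha⟩ : Fin n) a := by
    intro a ha hns
    refine (hrem _ _).mpr ⟨⟨a, ha⟩, ?_, rfl, rfl⟩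
    rintro ⟨i, hi⟩
    exact hns i (congrArg Fin.val hi)
  -- removed columns carry a removable pipe
  have hCol : ∀ (b : ℕ) (hb : b < n), (∀ j : Fin m, (t j : ℕ) ≠ b) →
      ∃ k : Fin n, (∀ i : Fin m, s i ≠ k) ∧ (w k : ℕ) = b ∧
        B.toDiagram.RemovablePipe b k := by
    intro b hb hnt
    refine ⟨w.symm ⟨b, hb⟩, ?_, ?_, ?_⟩
    · intro i hi
      have h1 : w (s i) = ⟨b, hb⟩ := by rw [hi, Equiv.apply_symm_apply]
      have h2 : (t (u i) : ℕ) = b := by rw [← hst i, h1]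
      exact hnt (u i) h2
    · rw [Equiv.apply_symm_apply]
    · refine (hrem _ _).mpr ⟨w.symm ⟨b, hb⟩, ?_, rfl, ?_⟩
      · rintro ⟨i, hi⟩
        have h1 : w (s i) = ⟨b, hb⟩ := by rw [hi, Equiv.apply_symm_apply]
        have h2 : (t (u i) : ℕ) = b := by rw [← hst i, h1]
        exact hnt (u i) h2
      · rw [Equiv.apply_symm_apply]
  -- in a removed row, tiles in surviving columns transmit vertical segments
  have hrowNS : ∀ (a : ℕ) (ha : a < n), (∀ i : Fin m, (s i : ℕ) ≠ a) →
      ∀ j : Fin m, (B.tile a (t j)).north = (B.tile a (t j)).south := by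
    intro a ha hns j
    obtain ⟨-, -, hrow, -⟩ := hRow a ha hns
    have hne : ((t j : Fin n) : ℕ) ≠ ((w ⟨a, ha⟩ : Fin n) : ℕ) := by
      intro hEq
      have h1 : (t j : Fin n) = w ⟨a, ha⟩ := Fin.ext hEq
      rw [htw j] at h1
      have h2 := w.injective h1
      exact hns (u.symm j) (congrArg Fin.val h2)
    exact (RPJAux.rowProp B ha (w ⟨a, ha⟩).isLt hrow (t j) (t j : Fin n).isLt hne).1
  -- removed rows contain no j-elbows
  have hrowNoJ : ∀ (a : ℕ) (ha : a < n), (∀ i : Fin m, (s i : ℕ) ≠ a) →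
      ∀ b, b < n → B.tile a b ≠ Tile.jelbow := by
    intro a ha hns b hb
    obtain ⟨-, hrel, hrow, -⟩ := hRow a ha hns
    by_cases hbe : b = ((w ⟨a, ha⟩ : Fin n) : ℕ)
    · rw [hbe, hrel]; decide
    · exact (RPJAux.rowProp B ha (w ⟨a, ha⟩).isLt hrow b hb hbe).2
  -- in a removed column, tiles in surviving rows transmit horizontal segments
  have hcolWE : ∀ (b : ℕ) (hb : b < n), (∀ j : Fin m, (t j : ℕ) ≠ b) →
      ∀ i : Fin m, (B.tile (s i) b).west = (B.tile (s i) b).east := by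
    intro b hb hnt i
    obtain ⟨k, hk1, hk2, hRP⟩ := hCol b hb hnt
    obtain ⟨-, -, -, hcol⟩ := hRP
    have hne : ((s i : Fin n) : ℕ) ≠ (k : ℕ) := fun h => hk1 i (Fin.ext h)
    exact (RPJAux.colProp B k.isLt hb hcol (s i) (s i : Fin n).isLt hne).1
  -- removed columns contain no j-elbows in surviving rows
  have hcolNoJ : ∀ (b : ℕ) (hb : b < n), (∀ j : Fin m, (t j : ℕ) ≠ b) →
      ∀ i : Fin m, B.tile (s i) b ≠ Tile.jelbow := by
    intro b hb hnt i
    obtain ⟨k, hk1, hk2, hRP⟩ := hCol b hb hnt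
    obtain ⟨-, -, -, hcol⟩ := hRP
    have hne : ((s i : Fin n) : ℕ) ≠ (k : ℕ) := fun h => hk1 i (Fin.ext h)
    exact (RPJAux.colProp B k.isLt hb hcol (s i) (s i : Fin n).isLt hne).2
  -- chaining lemmas
  have keyV : ∀ (j : Fin m) (a b : ℕ), a ≤ b → b < n →
      (∀ r, a ≤ r → r < b → ∀ i : Fin m, (s i : ℕ) ≠ r) →
      (B.tile a (t j)).north = (B.tile b (t j)).north := by
    intro j a b hab
    induction b, hab using Nat.le_induction with
    | base => intro _ _; rfl
    | succ b hb ih =>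
      intro hbn hmid
      rw [ih (by omega) (fun r h1 h2 i => hmid r h1 (by omega) i)]
      rw [hrowNS b (by omega) (fun i => hmid b hb (by omega) i) j]
      exact B.vmatch b (t j) hbn (t j : Fin n).isLt
  have keyS : ∀ (j : Fin m) (a b : ℕ), a ≤ b → b < n →
      (∀ r, a < r → r ≤ b → ∀ i : Fin m, (s i : ℕ) ≠ r) →
      (B.tile a (t j)).south = (B.tile b (t j)).south := by
    intro j a b hab
    induction b, hab using Nat.le_induction with
    | base => intro _ _; rfl
    | succ b hb ih =>
      intro hbn hmid
      rw [ih (by omega) (fun r h1 h2 i => hmid r h1 (by omega) i)]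
      rw [B.vmatch b (t j) hbn (t j : Fin n).isLt]
      exact hrowNS (b + 1) hbn (fun i => hmid (b + 1) (by omega) le_rfl i) j
  have keyW : ∀ (i : Fin m) (a b : ℕ), a ≤ b → b < n →
      (∀ c, a ≤ c → c < b → ∀ j : Fin m, (t j : ℕ) ≠ c) →
      (B.tile (s i) a).west = (B.tile (s i) b).west := by
    intro i a b hab
    induction b, hab using Nat.le_induction with
    | base => intro _ _; rfl
    | succ b hb ih =>
      intro hbn hmid
      rw [ih (by omega) (fun c h1 h2 j => hmid c h1 (by omega) j)]
      rw [hcolWE b (by omega) (fun j => hmid b hb (by omega) j) i]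
      exact B.hmatch (s i) b (s i : Fin n).isLt hbn
  have keyE : ∀ (i : Fin m) (a b : ℕ), a ≤ b → b < n →
      (∀ c, a < c → c ≤ b → ∀ j : Fin m, (t j : ℕ) ≠ c) →
      (B.tile (s i) a).east = (B.tile (s i) b).east := by
    intro i a b hab
    induction b, hab using Nat.le_induction with
    | base => intro _ _; rfl
    | succ b hb ih =>
      intro hbn hmid
      rw [ih (by omega) (fun c h1 h2 j => hmid c h1 (by omega) j)]
      rw [B.hmatch (s i) b (s i : Fin n).isLt hbn]
      exact hcolWE (b + 1) hbn (fun j => hmid (b + 1) (by omega) le_rfl j) i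
  -- the submatrix tile function
  set f : ℕ → ℕ → Tile := fun a b =>
    if h : a < m ∧ b < m then B.tile (s ⟨a, h.1⟩) (t ⟨b, h.2⟩) else Tile.blank with hfdef
  have hf : ∀ (a b : ℕ) (ha : a < m) (hb : b < m),
      f a b = B.tile (s ⟨a, ha⟩) (t ⟨b, hb⟩) := by
    intro a b ha hb
    simp only [hfdef]
    rw [dif_pos ⟨ha, hb⟩]
  have hf' : ∀ a b, ¬(a < m ∧ b < m) → f a b = Tile.blank := by
    intro a b h
    simp only [hfdef]
    rw [dif_neg h]
  -- rows strictly between consecutive s-values are removed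
  have hmidrow : ∀ (i i' : Fin m) (r : ℕ), (s i : ℕ) < r → r < (s i' : ℕ) →
      ((i : ℕ) + 1 = (i' : ℕ)) → ∀ i'' : Fin m, (s i'' : ℕ) ≠ r := by
    intro i i' r h1 h2 h3 i'' heq
    have ha : s i < s i'' := by rw [Fin.lt_def]; omega
    have hb : s i'' < s i' := by rw [Fin.lt_def]; omega
    have ha' : i < i'' := hsmono.lt_iff_lt.mp ha
    have hb' : i'' < i' := hsmono.lt_iff_lt.mp hb
    rw [Fin.lt_def] at ha' hb'
    omega
  have hmidcol : ∀ (j j' : Fin m) (c : ℕ), (t j : ℕ) < c → c < (t j' : ℕ) →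
      ((j : ℕ) + 1 = (j' : ℕ)) → ∀ j'' : Fin m, (t j'' : ℕ) ≠ c := by
    intro j j' c h1 h2 h3 j'' heq
    have ha : t j < t j'' := by rw [Fin.lt_def]; omega
    have hb : t j'' < t j' := by rw [Fin.lt_def]; omega
    have ha' : j < j'' := htmono.lt_iff_lt.mp ha
    have hb' : j'' < j' := htmono.lt_iff_lt.mp hb
    rw [Fin.lt_def] at ha' hb'
    omega
  have hjcard : ((Finset.range m ×ˢ Finset.range m).filter
        (fun c => f c.1 c.2 = Tile.jelbow)).card =
      ((Finset.range n ×ˢ Finset.range n).filter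
        (fun c => B.tile c.1 c.2 = Tile.jelbow)).card := by
    refine Finset.card_nbij
      (fun c => if h : c.1 < m ∧ c.2 < m then
        (((s ⟨c.1, h.1⟩ : Fin n) : ℕ), ((t ⟨c.2, h.2⟩ : Fin n) : ℕ)) else c)
      ?_ ?_ ?_
    · intro c (hc : c ∈ (Finset.range m ×ˢ Finset.range m).filter (fun c => f c.1 c.2 = Tile.jelbow))
      simp only [Finset.mem_coe, Finset.mem_filter, Finset.mem_product, Finset.mem_range] at hc ⊢
      obtain ⟨⟨h1, h2⟩, h3⟩ := hc
      rw [dif_pos ⟨h1, h2⟩]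
      refine ⟨⟨(s ⟨c.1, h1⟩ : Fin n).isLt, (t ⟨c.2, h2⟩ : Fin n).isLt⟩, ?_⟩
      rw [hf c.1 c.2 h1 h2] at h3
      exact h3
    · intro c1 hc1 c2 hc2 heq
      simp only [Finset.coe_filter, Set.mem_setOf_eq, Finset.mem_product,
        Finset.mem_range] at hc1 hc2
      obtain ⟨⟨h11, h12⟩, -⟩ := hc1
      obtain ⟨⟨h21, h22⟩, -⟩ := hc2
      simp only [dif_pos (show c1.1 < m ∧ c1.2 < m from ⟨h11, h12⟩),
        dif_pos (show c2.1 < m ∧ c2.2 < m from ⟨h21, h22⟩)] at heq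
      have e1 : ((s ⟨c1.1, h11⟩ : Fin n) : ℕ) = ((s ⟨c2.1, h21⟩ : Fin n) : ℕ) :=
        congrArg Prod.fst heq
      have e2 : ((t ⟨c1.2, h12⟩ : Fin n) : ℕ) = ((t ⟨c2.2, h22⟩ : Fin n) : ℕ) :=
        congrArg Prod.snd heq
      have e1' : (⟨c1.1, h11⟩ : Fin m) = ⟨c2.1, h21⟩ := s.injective (Fin.ext e1)
      have e2' : (⟨c1.2, h12⟩ : Fin m) = ⟨c2.2, h22⟩ := t.injective (Fin.ext e2)
      exact Prod.ext (by simpa using congrArg Fin.val e1')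
        (by simpa using congrArg Fin.val e2')
    · rintro ⟨a, b⟩ hab
      simp only [Finset.coe_filter, Set.mem_setOf_eq, Finset.mem_product,
        Finset.mem_range] at hab
      obtain ⟨⟨ha, hb⟩, hjel⟩ := hab
      have hi : ∃ i : Fin m, (s i : ℕ) = a := by
        by_contra h
        push_neg at h
        exact hrowNoJ a ha h b hb hjel
      obtain ⟨i, hi⟩ := hi
      have hj : ∃ j : Fin m, (t j : ℕ) = b := by
        by_contra h
        push_neg at h
        have := hcolNoJ b hb h i
        rw [hi] at this
        exact this hjel
      obtain ⟨j, hj⟩ := hj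
      refine ⟨((i : ℕ), (j : ℕ)), ?_, ?_⟩
      · simp only [Finset.coe_filter, Set.mem_setOf_eq, Finset.mem_product,
          Finset.mem_range]
        refine ⟨⟨i.isLt, j.isLt⟩, ?_⟩
        rw [hf i j i.isLt j.isLt]
        simp only [Fin.eta]
        rw [hi, hj]
        exact hjel
      · simp only [dif_pos (show ((i : ℕ), (j : ℕ)).1 < m ∧ ((i : ℕ), (j : ℕ)).2 < m from
          ⟨i.isLt, j.isLt⟩), Fin.eta, hi, hj]
  refine ⟨⟨⟨f, ?_, ?_, ?_, ?_, ?_, ?_, hf'⟩, ?_⟩, ?_, ?_, ?_⟩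
  -- vmatch
  · intro a b ha hb
    have ha' : a < m := by omega
    rw [hf a b ha' hb, hf (a + 1) b ha hb]
    have hlt : ((s ⟨a, ha'⟩ : Fin n) : ℕ) < ((s ⟨a + 1, ha⟩ : Fin n) : ℕ) :=
      hsmono (Fin.mk_lt_mk.mpr (by omega))
    have hn2 := (s ⟨a + 1, ha⟩ : Fin n).isLt
    rw [B.vmatch (s ⟨a, ha'⟩) (t ⟨b, hb⟩) (by omega) (t ⟨b, hb⟩ : Fin n).isLt]
    exact keyV ⟨b, hb⟩ ((s ⟨a, ha'⟩ : ℕ) + 1) (s ⟨a + 1, ha⟩) (by omega) hn2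
      (fun r h1 h2 => hmidrow ⟨a, ha'⟩ ⟨a + 1, ha⟩ r (by omega) h2 rfl)
  -- hmatch
  · intro a b ha hb
    have hb' : b < m := by omega
    rw [hf a b ha hb', hf a (b + 1) ha hb]
    have hlt : ((t ⟨b, hb'⟩ : Fin n) : ℕ) < ((t ⟨b + 1, hb⟩ : Fin n) : ℕ) :=
      htmono (Fin.mk_lt_mk.mpr (by omega))
    have hn2 := (t ⟨b + 1, hb⟩ : Fin n).isLt
    rw [B.hmatch (s ⟨a, ha⟩) (t ⟨b, hb'⟩) (s ⟨a, ha⟩ : Fin n).isLt (by omega)]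
    exact keyW ⟨a, ha⟩ ((t ⟨b, hb'⟩ : ℕ) + 1) (t ⟨b + 1, hb⟩) (by omega) hn2
      (fun c h1 h2 => hmidcol ⟨b, hb'⟩ ⟨b + 1, hb⟩ c (by omega) h2 rfl)
  -- bottom
  · intro b hb
    have hm : m - 1 < m := by omega
    rw [hf (m - 1) b hm hb]
    have hsn := (s ⟨m - 1, hm⟩ : Fin n).isLt
    have hmid : ∀ r, ((s ⟨m - 1, hm⟩ : Fin n) : ℕ) < r → r ≤ n - 1 →
        ∀ i'' : Fin m, (s i'' : ℕ) ≠ r := by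
      intro r h1 h2 i'' heq
      have h4 : (i'' : ℕ) ≤ m - 1 := by have := i''.isLt; omega
      have h3 : s i'' ≤ s ⟨m - 1, hm⟩ := hsmono.monotone (Fin.le_def.mpr h4)
      have h5 := Fin.le_def.mp h3
      omega
    rw [keyS ⟨b, hb⟩ (s ⟨m - 1, hm⟩) (n - 1) (by omega) (by omega) hmid]
    exact B.bottom (t ⟨b, hb⟩) (t ⟨b, hb⟩ : Fin n).isLt
  -- right
  · intro a ha
    have hm : m - 1 < m := by omega
    rw [hf a (m - 1) ha hm]
    have htn := (t ⟨m - 1, hm⟩ : Fin n).isLt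
    have hmid : ∀ c, ((t ⟨m - 1, hm⟩ : Fin n) : ℕ) < c → c ≤ n - 1 →
        ∀ j'' : Fin m, (t j'' : ℕ) ≠ c := by
      intro c h1 h2 j'' heq
      have h4 : (j'' : ℕ) ≤ m - 1 := by have := j''.isLt; omega
      have h3 : t j'' ≤ t ⟨m - 1, hm⟩ := htmono.monotone (Fin.le_def.mpr h4)
      have h5 := Fin.le_def.mp h3
      omega
    rw [keyE ⟨a, ha⟩ (t ⟨m - 1, hm⟩) (n - 1) (by omega) (by omega) hmid]
    exact B.right (s ⟨a, ha⟩) (s ⟨a, ha⟩ : Fin n).isLt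
  -- top
  · intro b hb
    have hm : 0 < m := by omega
    rw [hf 0 b hm hb]
    have hmid : ∀ r, 0 ≤ r → r < ((s ⟨0, hm⟩ : Fin n) : ℕ) →
        ∀ i'' : Fin m, (s i'' : ℕ) ≠ r := by
      intro r _ h2 i'' heq
      have h4 : (⟨0, hm⟩ : Fin m) ≤ i'' := Fin.le_def.mpr (Nat.zero_le _)
      have h5 := Fin.le_def.mp (hsmono.monotone h4)
      omega
    rw [← keyV ⟨b, hb⟩ 0 (s ⟨0, hm⟩) (Nat.zero_le _) (s ⟨0, hm⟩ : Fin n).isLt hmid]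
    exact B.top (t ⟨b, hb⟩) (t ⟨b, hb⟩ : Fin n).isLt
  -- left
  · intro a ha
    have hm : 0 < m := by omega
    rw [hf a 0 ha hm]
    have hmid : ∀ c, 0 ≤ c → c < ((t ⟨0, hm⟩ : Fin n) : ℕ) →
        ∀ j'' : Fin m, (t j'' : ℕ) ≠ c := by
      intro c _ h2 j'' heq
      have h4 : (⟨0, hm⟩ : Fin m) ≤ j'' := Fin.le_def.mpr (Nat.zero_le _)
      have h5 := Fin.le_def.mp (htmono.monotone h4)
      omega
    rw [← keyW ⟨a, ha⟩ 0 (t ⟨0, hm⟩) (Nat.zero_le _) (t ⟨0, hm⟩ : Fin n).isLt hmid]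
    exact B.left (s ⟨a, ha⟩) (s ⟨a, ha⟩ : Fin n).isLt
  -- nobump
  · intro a b
    show f a b ≠ Tile.bump
    by_cases h : a < m ∧ b < m
    · rw [hf a b h.1 h.2]; exact B.nobump _ _
    · rw [hf' a b h]; decide
  -- tile description
  · intro i j
    show f (i : ℕ) (j : ℕ) = _
    rw [hf (i : ℕ) (j : ℕ) i.isLt j.isLt]
  -- jcount
  · show ((Finset.range m ×ˢ Finset.range m).filter
        (fun c => f c.1 c.2 = Tile.jelbow)).card = B.toDiagram.jcount
    exact hjcard
  -- weight
  · intro _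
    show wtβ B.toDiagram = wtβ _
    simp only [wtβ, Diagram.jcount]
    rw [hjcard]
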